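/- arXiv:1711.07544 — 3 statements merged into one kernel-verified Lean document; each statement's English description precedes it below -/
import Mathlib

section
/- Let G : ℝ^m → ℝ^p, m ≥ p > 0, be a continuously differentiable map with G(0)=0. Suppose there exists ρ₀>0 such that (i) every x with ‖x‖ ≤ ρ₀, G(x)=0 and DG(x) not surjective satisfies x = 0 (i.e. Sing G ∩ G⁻¹(0) = {0} as germs), and (ii) for every δ>0 there exists x ≠ 0 with ‖x‖ < δ and G(x)=0. Then G is nice: for every ε ∈ (0,ρ₀) the image G(B_ε) is a neighbourhood of 0 in ℝ^p, and for all ε, ε' ∈ (0,ρ₀) there exists δ>0 such that G(B_ε ∩ Sing G) ∩ B_δ = G(B_{ε'} ∩ Sing G) ∩ B_δ. -/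
open Metric Set Function

noncomputable section

/-- The singular set of `G`: points where the derivative is not surjective. -/
def singSet {m p : ℕ} (G : EuclideanSpace ℝ (Fin m) → EuclideanSpace ℝ (Fin p)) :
    Set (EuclideanSpace ℝ (Fin m)) :=
  {x | ¬ Function.Surjective (fderiv ℝ G x)}

lemma surjective_iff_isUnit_comp_adjoint {m p : ℕ}
    (T : EuclideanSpace ℝ (Fin m) →L[ℝ] EuclideanSpace ℝ (Fin p)) :
    Surjective T ↔ IsUnit (T ∘L ContinuousLinearMap.adjoint T) := by
  set S := T ∘L ContinuousLinearMap.adjoint T with hS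
  constructor
  · intro hT
    -- S is injective
    have hinj : Injective S := by
      have hker : ∀ x, S x = 0 → x = 0 := by
        intro x hx
        have h1 : ContinuousLinearMap.adjoint T x = 0 := by
          have : (inner ℝ (ContinuousLinearMap.adjoint T x)
              (ContinuousLinearMap.adjoint T x) : ℝ) = 0 := by
            rw [ContinuousLinearMap.adjoint_inner_left]
            have : T (ContinuousLinearMap.adjoint T x) = 0 := hx
            rw [this, inner_zero_right]
          exact inner_self_eq_zero.mp this
        -- adjoint T injective since T surjective
        have : (inner ℝ x x : ℝ) = 0 := by
          obtain ⟨y, hy⟩ := hT x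
          calc (inner ℝ x x : ℝ) = inner ℝ x (T y) := by rw [hy]
            _ = inner ℝ (ContinuousLinearMap.adjoint T x) y := by
                rw [ContinuousLinearMap.adjoint_inner_left]
            _ = 0 := by rw [h1, inner_zero_left]
        exact inner_self_eq_zero.mp this
      intro x y hxy
      have : S (x - y) = 0 := by rw [map_sub, hxy, sub_self]
      exact sub_eq_zero.mp (hker _ this)
    -- finite dimensional endomorphism: injective → surjective
    have hsurj : Surjective S := LinearMap.injective_iff_surjective.mp hinj
    exact ⟨(ContinuousLinearEquiv.ofBijective S
      (LinearMap.ker_eq_bot.mpr hinj) (LinearMap.range_eq_top.mpr hsurj)).toUnit,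
      ContinuousLinearEquiv.coe_ofBijective _ _ _⟩
  · rintro ⟨u, hu⟩ y
    set v : EuclideanSpace ℝ (Fin p) →L[ℝ] EuclideanSpace ℝ (Fin p) := ↑u⁻¹ with hv
    refine ⟨ContinuousLinearMap.adjoint T (v y), ?_⟩
    have h1 : ((↑u * v : EuclideanSpace ℝ (Fin p) →L[ℝ] EuclideanSpace ℝ (Fin p))) y = y := by
      rw [hv, Units.mul_inv]; rfl
    have h2 : ((↑u * v : EuclideanSpace ℝ (Fin p) →L[ℝ] EuclideanSpace ℝ (Fin p))) y
        = S (v y) := by rw [hu]; rfl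
    have h3 : S (v y) = y := by rw [← h2, h1]
    exact h3

lemma isClosed_singSet {m p : ℕ}
    (G : EuclideanSpace ℝ (Fin m) → EuclideanSpace ℝ (Fin p))
    (hG : ContDiff ℝ 1 G) : IsClosed (singSet G) := by
  have hopen : IsOpen {T : EuclideanSpace ℝ (Fin m) →L[ℝ] EuclideanSpace ℝ (Fin p) |
      Surjective T} := by
    have : {T : EuclideanSpace ℝ (Fin m) →L[ℝ] EuclideanSpace ℝ (Fin p) | Surjective T}
        = (fun T : EuclideanSpace ℝ (Fin m) →L[ℝ] EuclideanSpace ℝ (Fin p) =>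
            T ∘L ContinuousLinearMap.adjoint T) ⁻¹'
          {g : EuclideanSpace ℝ (Fin p) →L[ℝ] EuclideanSpace ℝ (Fin p) | IsUnit g} := by
      ext T
      exact surjective_iff_isUnit_comp_adjoint T
    rw [this]
    apply Units.isOpen.preimage
    exact Continuous.clm_comp continuous_id
      ((ContinuousLinearMap.adjoint :
        (EuclideanSpace ℝ (Fin m) →L[ℝ] EuclideanSpace ℝ (Fin p)) ≃ₗᵢ⋆[ℝ] _).continuous)
  have hfd : Continuous (fderiv ℝ G) := hG.continuous_fderiv one_ne_zero
  have : singSet G = (fderiv ℝ G) ⁻¹'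
      {T : EuclideanSpace ℝ (Fin m) →L[ℝ] EuclideanSpace ℝ (Fin p) | Surjective T}ᶜ := rfl
  rw [this]
  exact (hopen.isClosed_compl).preimage hfd

theorem nice_of_isolated_singular_zero (m p : ℕ) (hmp : p ≤ m) (hp : 0 < p)
    (G : EuclideanSpace ℝ (Fin m) → EuclideanSpace ℝ (Fin p))
    (hG : ContDiff ℝ 1 G) (hG0 : G 0 = 0)
    (ρ₀ : ℝ) (hρ₀ : 0 < ρ₀)
    (hsing : ∀ x : EuclideanSpace ℝ (Fin m),
      ‖x‖ ≤ ρ₀ → G x = 0 → ¬ Function.Surjective (fderiv ℝ G x) → x = 0)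
    (hdim : ∀ δ > (0 : ℝ), ∃ x : EuclideanSpace ℝ (Fin m), x ≠ 0 ∧ ‖x‖ < δ ∧ G x = 0) :
    (∀ ε : ℝ, 0 < ε → ε < ρ₀ →
        G '' ball 0 ε ∈ nhds (0 : EuclideanSpace ℝ (Fin p))) ∧
    (∀ ε ε' : ℝ, 0 < ε → ε < ρ₀ → 0 < ε' → ε' < ρ₀ → ∃ δ > (0 : ℝ),
        G '' (ball 0 ε ∩ singSet G) ∩ ball 0 δ =
        G '' (ball 0 ε' ∩ singSet G) ∩ ball 0 δ) := by
  constructor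
  · -- Part 1
    intro ε hε hερ
    obtain ⟨x, hx0, hxε, hGx⟩ := hdim ε hε
    have hxρ : ‖x‖ ≤ ρ₀ := le_of_lt (lt_trans hxε hερ)
    have hsurj : Surjective (fderiv ℝ G x) := by
      by_contra h
      exact hx0 (hsing x hxρ hGx h)
    have hstrict : HasStrictFDerivAt G (fderiv ℝ G x) x :=
      hG.contDiffAt.hasStrictFDerivAt one_ne_zero
    have hmap : Filter.map G (nhds x) = nhds (G x) :=
      hstrict.map_nhds_eq_of_surj (LinearMap.range_eq_top.mpr hsurj)
    have hball : ball (0 : EuclideanSpace ℝ (Fin m)) ε ∈ nhds x :=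
      isOpen_ball.mem_nhds (by simpa [mem_ball, dist_eq_norm] using hxε)
    have : G '' ball 0 ε ∈ Filter.map G (nhds x) := Filter.image_mem_map hball
    rwa [hmap, hGx] at this
  · -- Part 2
    intro ε ε' hε hερ hε' hε'ρ
    set a := min ε ε' with ha
    set b := max ε ε' with hb
    have ha0 : 0 < a := lt_min hε hε'
    have hbρ : b < ρ₀ := max_lt hερ hε'ρ
    -- The compact annulus intersected with the singular set
    set K := (closedBall (0 : EuclideanSpace ℝ (Fin m)) b \ ball 0 a) ∩ singSet G with hK
    have hKclosed : IsClosed K := by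
      rw [hK, diff_eq]
      exact (isClosed_closedBall.inter isOpen_ball.isClosed_compl).inter
        (isClosed_singSet G hG)
    have hKcompact : IsCompact K :=
      (isCompact_closedBall (0 : EuclideanSpace ℝ (Fin m)) b).of_isClosed_subset hKclosed
        (fun x hx => hx.1.1)
    have hGne : ∀ x ∈ K, G x ≠ 0 := by
      rintro x ⟨⟨hxb, hxa⟩, hxs⟩ hGx
      have : x = 0 := hsing x (by
        rw [mem_closedBall, dist_zero_right] at hxb
        exact hxb.trans hbρ.le) hGx hxs
      apply hxa
      rw [this]
      exact mem_ball_self ha0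
    -- choose δ
    obtain ⟨δ, hδ0, hδ⟩ : ∃ δ > (0 : ℝ), ∀ x ∈ K, δ ≤ ‖G x‖ := by
      rcases K.eq_empty_or_nonempty with hKe | hKne
      · exact ⟨1, one_pos, by rw [hKe]; simp⟩
      · obtain ⟨x₀, hx₀K, hmin⟩ := hKcompact.exists_isMinOn hKne
          ((hG.continuous.norm).continuousOn)
        exact ⟨‖G x₀‖, norm_pos_iff.mpr (hGne x₀ hx₀K), fun x hx => hmin hx⟩
    refine ⟨δ, hδ0, ?_⟩
    -- key : for any r with a ≤ r ≤ b, the image ∩ ball δ equals that for a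
    have key : ∀ r : ℝ, a ≤ r → r ≤ b →
        G '' (ball 0 r ∩ singSet G) ∩ ball 0 δ =
        G '' (ball 0 a ∩ singSet G) ∩ ball 0 δ := by
      intro r har hrb
      apply Set.Subset.antisymm
      · rintro y ⟨⟨x, ⟨hxr, hxs⟩, rfl⟩, hyδ⟩
        refine ⟨⟨x, ⟨?_, hxs⟩, rfl⟩, hyδ⟩
        by_contra hxa
        have hxK : x ∈ K := by
          refine ⟨⟨?_, hxa⟩, hxs⟩
          rw [mem_closedBall, dist_zero_right]
          rw [mem_ball, dist_zero_right] at hxr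
          exact hxr.le.trans hrb
        have := hδ x hxK
        rw [mem_ball, dist_zero_right] at hyδ
        linarith
      · rintro y ⟨⟨x, ⟨hxa, hxs⟩, rfl⟩, hyδ⟩
        refine ⟨⟨x, ⟨?_, hxs⟩, rfl⟩, hyδ⟩
        rw [mem_ball, dist_zero_right] at hxa ⊢
        exact hxa.trans_le har
    rw [key ε (min_le_left _ _) (le_max_left _ _),
        key ε' (min_le_right _ _) (le_max_right _ _)]
end
end

section
/- Let G : ℝ^m → ℝ^p, m ≥ p > 0, be a continuously differentiable map with G(0)=0 satisfying condition (⋆): there exists ε₀>0 such that closure(M(G) \ G⁻¹(Disc G)) ∩ G⁻¹(0) ∩ B_{ε₀} ⊆ {0}. Then for every ε ∈ (0,ε₀) there exists η>0 such that every x with ‖x‖ = ε and G(x) ∈ B_η \ Disc G satisfies x ∉ M(G); that is, at such x the linear map v ↦ (DG(x)v, ⟨x,v⟩) is surjective, so the restriction of G to the sphere of radius ε is a submersion at every point of S_ε ∩ G⁻¹(B_η \ Disc G). -/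
open Metric Set Function

noncomputable section

/-- The discriminant of `G`. -/
def discSet {m p : ℕ} (G : EuclideanSpace ℝ (Fin m) → EuclideanSpace ℝ (Fin p)) :
    Set (EuclideanSpace ℝ (Fin p)) :=
  closure (G '' singSet G) ∪ (closure (range G) \ interior (range G))

/-- The Milnor set of `G`: points where `v ↦ (DG(x) v, ⟨x, v⟩)` is not surjective. -/
def milnorSet {m p : ℕ} (G : EuclideanSpace ℝ (Fin m) → EuclideanSpace ℝ (Fin p)) :
    Set (EuclideanSpace ℝ (Fin m)) :=
  {x | ¬ Function.Surjective
    (fun v : EuclideanSpace ℝ (Fin m) => (fderiv ℝ G x v, (inner ℝ x v : ℝ)))}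

theorem sphere_submersion_of_condition_star (m p : ℕ) (hmp : p ≤ m) (hp : 0 < p)
    (G : EuclideanSpace ℝ (Fin m) → EuclideanSpace ℝ (Fin p))
    (hG : ContDiff ℝ 1 G) (hG0 : G 0 = 0)
    (ε₀ : ℝ) (hε₀ : 0 < ε₀)
    (hstar : closure (milnorSet G \ G ⁻¹' discSet G) ∩ G ⁻¹' {0} ∩ ball 0 ε₀ ⊆ {0}) :
    ∀ ε : ℝ, 0 < ε → ε < ε₀ → ∃ η > (0 : ℝ),
      ∀ x : EuclideanSpace ℝ (Fin m), ‖x‖ = ε →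
        G x ∈ ball (0 : EuclideanSpace ℝ (Fin p)) η \ discSet G →
        x ∉ milnorSet G := by
  intro ε hε hεε₀
  by_contra h
  push_neg at h
  have h' : ∀ n : ℕ, ∃ x : EuclideanSpace ℝ (Fin m), ‖x‖ = ε ∧
      G x ∈ ball (0 : EuclideanSpace ℝ (Fin p)) (1/(n+1)) \ discSet G ∧
      x ∈ milnorSet G := fun n => h (1/(n+1)) (by positivity)
  choose x hx1 hx2 hx3 using h'
  have hcpt : IsCompact (sphere (0:EuclideanSpace ℝ (Fin m)) ε) := isCompact_sphere 0 ε
  have hxs : ∀ n, x n ∈ sphere (0:EuclideanSpace ℝ (Fin m)) ε := fun n => by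
    simp [mem_sphere_iff_norm, hx1 n]
  obtain ⟨x₀, hx₀s, φ, hφ, hconv⟩ := hcpt.tendsto_subseq hxs
  have hx₀n : ‖x₀‖ = ε := by simpa [mem_sphere_iff_norm] using hx₀s
  have hGx₀ : G x₀ = 0 := by
    have hc : Filter.Tendsto (fun n => G (x (φ n))) Filter.atTop (nhds (G x₀)) :=
      (hG.continuous.continuousAt.tendsto.comp hconv)
    have h0 : Filter.Tendsto (fun n => G (x (φ n))) Filter.atTop
        (nhds (0 : EuclideanSpace ℝ (Fin p))) := by
      rw [tendsto_zero_iff_norm_tendsto_zero]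
      apply squeeze_zero (fun n => norm_nonneg _) (fun n => ?_)
        tendsto_one_div_add_atTop_nhds_zero_nat
      have h1 : ‖G (x (φ n))‖ < 1/(φ n + 1) := by
        simpa [mem_ball, dist_eq_norm] using (hx2 (φ n)).1
      have h2 : (1:ℝ)/(φ n + 1) ≤ 1/(n + 1) := by
        apply one_div_le_one_div_of_le (by positivity)
        have hn : n ≤ φ n := hφ.le_apply
        have : (n:ℝ) ≤ (φ n : ℝ) := Nat.cast_le.mpr hn
        push_cast
        linarith
      linarith
    exact tendsto_nhds_unique hc h0
  have hcl : x₀ ∈ closure (milnorSet G \ G ⁻¹' discSet G) := by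
    apply mem_closure_of_tendsto hconv
    exact Filter.Eventually.of_forall (fun n => ⟨hx3 (φ n), (hx2 (φ n)).2⟩)
  have : x₀ ∈ ({0} : Set (EuclideanSpace ℝ (Fin m))) := by
    apply hstar
    refine ⟨⟨hcl, ?_⟩, ?_⟩
    · simp [hGx₀]
    · simp [mem_ball, dist_eq_norm, hx₀n, hεε₀]
  simp only [mem_singleton_iff] at this
  rw [this, norm_zero] at hx₀n
  exact hε.ne hx₀n
end
end

section
/- Let G : ℝ^m → ℝ^p, m ≥ p > 0, be a continuously differentiable map with G(0)=0, and let ε>0. Suppose that every x with ‖x‖ = ε and G(x) = 0 satisfies x ∉ M(G) (i.e. the linear map v ↦ (DG(x)v, ⟨x,v⟩) is surjective at every point of S_ε ∩ G⁻¹(0)). Then there exists η>0 such that every x with ‖x‖ = ε and ‖G(x)‖ < η satisfies x ∉ M(G); consequently the restriction of G to S_ε ∩ G⁻¹(B_η) is a submersion. -/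
open Metric Set Function

noncomputable section

/-- The set of surjective continuous linear maps between finite dimensional spaces is open. -/
lemma isOpen_setOf_surjective_clm {E F : Type*} [NormedAddCommGroup E] [NormedSpace ℝ E]
    [NormedAddCommGroup F] [NormedSpace ℝ F] [FiniteDimensional ℝ E] [FiniteDimensional ℝ F] :
    IsOpen {L : E →L[ℝ] F | Function.Surjective L} := by
  rw [isOpen_iff_forall_mem_open]
  intro L hL
  obtain ⟨g, hg⟩ := L.toLinearMap.exists_rightInverse_of_surjective
    (LinearMap.range_eq_top.2 hL)
  set S : F →L[ℝ] E := LinearMap.toContinuousLinearMap g with hS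
  have hLS : ∀ v : F, L (S v) = v := by
    intro v
    have := LinearMap.congr_fun hg v
    simpa [hS] using this
  refine ⟨Metric.ball L (1 / (‖S‖ + 1)), ?_, Metric.isOpen_ball, ?_⟩
  · intro L' hL'
    have hdist : ‖L' - L‖ < 1 / (‖S‖ + 1) := by
      rw [Metric.mem_ball, dist_eq_norm] at hL'
      exact hL'
    set t : F →L[ℝ] F := (L - L').comp S with ht
    have hSpos : (0:ℝ) < ‖S‖ + 1 := by positivity
    have htnorm : ‖t‖ < 1 := by
      calc ‖t‖ ≤ ‖L - L'‖ * ‖S‖ := ContinuousLinearMap.opNorm_comp_le _ _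
        _ < (1 / (‖S‖ + 1)) * (‖S‖ + 1) := by
            apply mul_lt_mul' ?_ (by linarith [norm_nonneg S]) (norm_nonneg S) (by positivity)
            rw [← norm_neg]; simpa using hdist.le
        _ = 1 := by field_simp
    have hunit : ∀ v : F, (1 - t) ((Units.oneSub t htnorm)⁻¹.val v) = v := by
      intro v
      have h := (Units.oneSub t htnorm).mul_inv
      have : ((Units.oneSub t htnorm).val * (Units.oneSub t htnorm)⁻¹.val) v = v := by
        rw [h]; rfl
      simpa [Units.oneSub] using this
    have hL'S : ∀ v : F, L' (S ((Units.oneSub t htnorm)⁻¹.val v)) = v := by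
      intro v
      have h1 := hunit v
      have : (1 - t) ((Units.oneSub t htnorm)⁻¹.val v)
          = L' (S ((Units.oneSub t htnorm)⁻¹.val v)) := by
        simp only [ht, ContinuousLinearMap.sub_apply, ContinuousLinearMap.one_apply,
          ContinuousLinearMap.comp_apply, ContinuousLinearMap.sub_apply]
        rw [hLS]
        abel
      rw [this] at h1
      exact h1
    intro v
    exact ⟨S ((Units.oneSub t htnorm)⁻¹.val v), hL'S v⟩
  · exact Metric.mem_ball_self (by positivity)

theorem sphere_transversality_is_open (m p : ℕ) (hmp : p ≤ m) (hp : 0 < p)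
    (G : EuclideanSpace ℝ (Fin m) → EuclideanSpace ℝ (Fin p))
    (hG : ContDiff ℝ 1 G) (hG0 : G 0 = 0)
    (ε : ℝ) (hε : 0 < ε)
    (hsphere : ∀ x : EuclideanSpace ℝ (Fin m), ‖x‖ = ε → G x = 0 → x ∉ milnorSet G) :
    ∃ η > (0 : ℝ), ∀ x : EuclideanSpace ℝ (Fin m),
      ‖x‖ = ε → ‖G x‖ < η → x ∉ milnorSet G := by
  classical
  let E := EuclideanSpace ℝ (Fin m)
  let F := EuclideanSpace ℝ (Fin p)
  -- the assignment x ↦ (DG(x), ⟨x, ·⟩) as a continuous map into CLMs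
  set Φ : E → (E →L[ℝ] F × ℝ) := fun x => (fderiv ℝ G x).prod (innerSL ℝ x) with hΦ
  have hΦcont : Continuous Φ := by
    have h1 : Continuous fun x : E => fderiv ℝ G x := by
      have := hG.continuous_fderiv one_ne_zero
      exact this
    have h2 : Continuous fun x : E => (innerSL ℝ x : E →L[ℝ] ℝ) :=
      (innerSL ℝ : E →L[ℝ] E →L[ℝ] ℝ).continuous
    exact ((ContinuousLinearMap.prodₗᵢ (𝕜 := ℝ) (E := E) (F := F) (G := ℝ)
      ℝ).continuous.comp (h1.prodMk h2) : _)
  have hmem : ∀ x : E, x ∈ milnorSet G ↔ ¬ Function.Surjective (Φ x) := by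
    intro x
    constructor
    · intro hx hs
      exact hx (fun y => by obtain ⟨v, hv⟩ := hs y; exact ⟨v, hv⟩)
    · intro hx hs
      exact hx (fun y => by obtain ⟨v, hv⟩ := hs y; exact ⟨v, hv⟩)
  have hclosed : IsClosed (milnorSet G) := by
    have : milnorSet G = Φ ⁻¹' {L : E →L[ℝ] F × ℝ | Function.Surjective L}ᶜ := by
      ext x; simp [hmem x, mem_preimage]; exact Iff.rfl
    rw [this]
    exact (isOpen_setOf_surjective_clm.isClosed_compl).preimage hΦcont
  set C : Set E := Metric.sphere (0:E) ε ∩ milnorSet G with hC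
  have hCcompact : IsCompact C :=
    (isCompact_sphere (0:E) ε).inter_right hclosed
  rcases eq_empty_or_nonempty C with hCe | hCe
  · refine ⟨1, one_pos, fun x hx _ hmil => ?_⟩
    have : x ∈ C := ⟨by simpa [mem_sphere_zero_iff_norm] using hx, hmil⟩
    simp [hCe] at this
  · obtain ⟨x₀, hx₀C, hx₀min⟩ := hCcompact.exists_isMinOn hCe
      ((continuous_norm.comp hG.continuous).continuousOn)
    have hx₀norm : ‖x₀‖ = ε := by
      have := hx₀C.1; rwa [mem_sphere_zero_iff_norm] at this
    have hηpos : 0 < ‖G x₀‖ := by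
      rcases eq_or_lt_of_le (norm_nonneg (G x₀)) with h | h
      · exfalso
        exact hsphere x₀ hx₀norm (norm_eq_zero.mp h.symm) hx₀C.2
      · exact h
    refine ⟨‖G x₀‖, hηpos, fun x hx hGx hmil => ?_⟩
    have hxC : x ∈ C := ⟨by simpa [mem_sphere_zero_iff_norm] using hx, hmil⟩
    have h2 : ‖G x₀‖ ≤ ‖G x‖ := hx₀min hxC
    linarith
end
end
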